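/- Let P_1, …, P_m be a Clifford system of signature (m, r) on ℝ^{2l}_s with m ≡ 0 (mod 4), r ≡ 0 (mod 2), and s ≤ 2l − 1, and set P := P_1P_2⋯P_m. Then for each ε ∈ {−1, 1}, if E_ε(P) ∩ S^{2l−1}_s is non-empty, then E_ε(P) ∩ S^{2l−1}_s is path-connected. -/

import Mathlib

open Matrix

noncomputable section

/-- Entries of the signature matrix `J_{r,m-r}`, with 1-based indices:
`η_{ii} = -1` for `1 ≤ i ≤ r` and `η_{ii} = 1` for `r < i`; off-diagonal entries vanish. -/
def cliffEta (r i j : ℕ) : ℝ :=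
  if i = j then (if i ≤ r then -1 else 1) else 0

/-- The matrix `J_{s,n-s} = diag(-E_s, E_{n-s})`. -/
def psJ (n s : ℕ) : Matrix (Fin n) (Fin n) ℝ :=
  Matrix.diagonal fun i => if (i : ℕ) < s then (-1 : ℝ) else 1

/-- The pseudo-inner product `⟨u, v⟩ = uᵀ J_{s,n-s} v` of `ℝ^n_s`. -/
def psInner (n s : ℕ) (u v : Fin n → ℝ) : ℝ :=
  u ⬝ᵥ ((psJ n s) *ᵥ v)

/-- A Clifford system of signature `(m, r)` on `ℝ^{2l}_s`, indexed by `1, …, m`: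
each `P i` is symmetric with respect to the pseudo-inner product, and
`P i * P j + P j * P i = 2 η_{ij} E_{2l}`. -/
def IsCliffordSystem (l s m r : ℕ)
    (P : ℕ → Matrix (Fin (2 * l)) (Fin (2 * l)) ℝ) : Prop :=
  (∀ i ∈ Finset.Icc 1 m, (P i)ᵀ = psJ (2 * l) s * P i * psJ (2 * l) s) ∧
  (∀ i ∈ Finset.Icc 1 m, ∀ j ∈ Finset.Icc 1 m,
    P i * P j + P j * P i
      = (2 * cliffEta r i j) • (1 : Matrix (Fin (2 * l)) (Fin (2 * l)) ℝ))

section AuxPs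

variable {n s : ℕ}

lemma psJ_mul_psJ : psJ n s * psJ n s = 1 := by
  have h : (fun i : Fin n => (if (i:ℕ) < s then (-1:ℝ) else 1) * (if (i:ℕ) < s then (-1:ℝ) else 1))
      = fun _ => (1:ℝ) := funext fun i => by split_ifs <;> norm_num
  rw [psJ, diagonal_mul_diagonal, h, diagonal_one]

lemma psJ_transpose : (psJ n s)ᵀ = psJ n s := by
  rw [psJ, diagonal_transpose]

lemma psInner_add_left (u w v : Fin n → ℝ) :
    psInner n s (u + w) v = psInner n s u v + psInner n s w v := by
  simp [psInner, add_dotProduct]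

lemma psInner_smul_left (a : ℝ) (u v : Fin n → ℝ) :
    psInner n s (a • u) v = a * psInner n s u v := by
  simp [psInner, smul_dotProduct]

lemma psInner_smul_right (a : ℝ) (u v : Fin n → ℝ) :
    psInner n s u (a • v) = a * psInner n s u v := by
  simp [psInner, mulVec_smul, dotProduct_smul]

lemma psInner_comm (u v : Fin n → ℝ) : psInner n s u v = psInner n s v u := by
  simp only [psInner, psJ, dotProduct, mulVec_diagonal]
  exact Finset.sum_congr rfl fun i _ => by ring

lemma psInner_expand (a b : ℝ) (u v : Fin n → ℝ) :
    psInner n s (a • u + b • v) (a • u + b • v)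
      = a^2 * psInner n s u u + 2*a*b * psInner n s u v + b^2 * psInner n s v v := by
  rw [psInner_add_left, psInner_smul_left, psInner_smul_left]
  have h1 : psInner n s u (a • u + b • v) = a * psInner n s u u + b * psInner n s u v := by
    rw [psInner_comm, psInner_add_left, psInner_smul_left, psInner_smul_left,
      psInner_comm v u]
  have h2 : psInner n s v (a • u + b • v) = a * psInner n s u v + b * psInner n s v v := by
    rw [psInner_comm, psInner_add_left, psInner_smul_left, psInner_smul_left,
      psInner_comm u v]
  rw [h1, h2]; ring

lemma mulVec_dotProduct_comm (A : Matrix (Fin n) (Fin n) ℝ) (u w : Fin n → ℝ) :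
    (A *ᵥ u) ⬝ᵥ w = u ⬝ᵥ (Aᵀ *ᵥ w) := by
  rw [dotProduct_comm, dotProduct_mulVec, ← mulVec_transpose, dotProduct_comm]

lemma psInner_isometry (M : Matrix (Fin n) (Fin n) ℝ) (h : Mᵀ * psJ n s * M = psJ n s)
    (u v : Fin n → ℝ) : psInner n s (M *ᵥ u) (M *ᵥ v) = psInner n s u v := by
  unfold psInner
  rw [mulVec_mulVec, mulVec_dotProduct_comm, mulVec_mulVec, ← Matrix.mul_assoc, h]

lemma psInner_self_skew (A : Matrix (Fin n) (Fin n) ℝ)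
    (h : (psJ n s * A)ᵀ = -(psJ n s * A)) (z : Fin n → ℝ) :
    psInner n s z (A *ᵥ z) = 0 := by
  unfold psInner
  rw [mulVec_mulVec]
  set B := psJ n s * A with hB
  have h1 : z ⬝ᵥ (B *ᵥ z) = -(z ⬝ᵥ (B *ᵥ z)) := by
    conv_lhs => rw [dotProduct_mulVec, ← mulVec_transpose, h, neg_mulVec,
      neg_dotProduct, dotProduct_comm]
  linarith

end AuxPs

/-- for a Clifford system with `m ≡ 0 (mod 4)`, `r ≡ 0 (mod 2)`,
`s ≤ 2l - 1`, and `P = P_1 ⋯ P_m`: for `ε ∈ {-1, 1}`, if `E_ε(P) ∩ S^{2l-1}_s ≠ ∅`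
then `E_ε(P) ∩ S^{2l-1}_s` is path-connected. -/
theorem eigensphere_pathConnected (l s m r : ℕ) (hl : 0 < l) (hs : s ≤ 2 * l - 1)
    (hm : 2 ≤ m) (hm4 : m % 4 = 0) (hr : r ≤ m) (hr2 : r % 2 = 0)
    (P : ℕ → Matrix (Fin (2 * l)) (Fin (2 * l)) ℝ)
    (hP : IsCliffordSystem l s m r P)
    (Pm : Matrix (Fin (2 * l)) (Fin (2 * l)) ℝ)
    (hPm : Pm = ((List.range m).map fun k => P (1 + k)).prod)
    (ε : ℝ) (hε : ε = 1 ∨ ε = -1)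
    (hne : ({z | Pm *ᵥ z = ε • z ∧ psInner (2 * l) s z z = 1} :
      Set (Fin (2 * l) → ℝ)).Nonempty) :
    IsPathConnected ({z | Pm *ᵥ z = ε • z ∧ psInner (2 * l) s z z = 1} :
      Set (Fin (2 * l) → ℝ)) := by
  obtain ⟨hSym, hRel⟩ := hP
  have mem1 : (1:ℕ) ∈ Finset.Icc 1 m := by simp only [Finset.mem_Icc]; omega
  have mem2 : (2:ℕ) ∈ Finset.Icc 1 m := by simp only [Finset.mem_Icc]; omega
  have hJJ' : ∀ X : Matrix (Fin (2*l)) (Fin (2*l)) ℝ,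
      psJ (2*l) s * (psJ (2*l) s * X) = X := fun X => by
    rw [← Matrix.mul_assoc, psJ_mul_psJ, Matrix.one_mul]
  -- anticommutation for distinct indices
  have anti : ∀ i ∈ Finset.Icc 1 m, ∀ j ∈ Finset.Icc 1 m, i ≠ j →
      P i * P j = -(P j * P i) := by
    intro i hi j hj hij
    have h := hRel i hi j hj
    rw [show cliffEta r i j = 0 by simp [cliffEta, hij]] at h
    simp only [mul_zero, zero_smul] at h
    exact eq_neg_of_add_eq_zero_left h
  -- squares
  have sq : ∀ i ∈ Finset.Icc 1 m, P i * P i = cliffEta r i i • 1 := by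
    intro i hi
    have h := hRel i hi i hi
    have h2 : (2:ℝ) • (P i * P i) = (2:ℝ) • (cliffEta r i i • (1 : Matrix (Fin (2*l)) (Fin (2*l)) ℝ)) := by
      rw [two_smul, h, smul_smul]
    exact smul_right_injective _ two_ne_zero h2
  have e1 : cliffEta r 1 1 * cliffEta r 2 2 = 1 := by
    by_cases hc : 2 ≤ r
    · have h1 : 1 ≤ r := by omega
      simp [cliffEta, hc, h1]
    · have h1 : ¬ 1 ≤ r := by omega
      simp [cliffEta, hc, h1]
  -- transpose of Q = P 1 * P 2
  have hQT : (P 1 * P 2)ᵀ = psJ (2*l) s * (P 2 * (P 1 * psJ (2*l) s)) := by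
    rw [Matrix.transpose_mul, hSym 1 mem1, hSym 2 mem2]
    simp only [Matrix.mul_assoc]
    rw [hJJ']
  have Key1 : (P 1 * P 2)ᵀ * psJ (2*l) s * (P 1 * P 2) = psJ (2*l) s := by
    rw [hQT]
    simp only [Matrix.mul_assoc]
    rw [hJJ']
    rw [← Matrix.mul_assoc (P 1) (P 1) (P 2), sq 1 mem1, Matrix.smul_mul, Matrix.one_mul,
      Matrix.mul_smul, sq 2 mem2, smul_smul, e1, one_smul, Matrix.mul_one]
  have Key2 : (psJ (2*l) s * (P 1 * P 2))ᵀ = -(psJ (2*l) s * (P 1 * P 2)) := by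
    rw [Matrix.transpose_mul, hQT, psJ_transpose]
    simp only [Matrix.mul_assoc]
    rw [psJ_mul_psJ, Matrix.mul_one, anti 2 mem2 1 mem1 (by norm_num), Matrix.mul_neg]
  -- Q commutes with Pm
  have commQ : ∀ j, 3 ≤ j → j ≤ m → (P 1 * P 2) * P j = P j * (P 1 * P 2) := by
    intro j h3 hjm
    have memj : j ∈ Finset.Icc 1 m := by simp only [Finset.mem_Icc]; omega
    calc (P 1 * P 2) * P j = P 1 * (P 2 * P j) := Matrix.mul_assoc _ _ _
      _ = P 1 * (-(P j * P 2)) := by rw [anti 2 mem2 j memj (by omega)]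
      _ = (-(P 1 * P j)) * P 2 := by
          rw [Matrix.mul_neg, Matrix.neg_mul, Matrix.mul_assoc]
      _ = (P j * P 1) * P 2 := by rw [anti 1 mem1 j memj (by omega), neg_neg]
      _ = P j * (P 1 * P 2) := Matrix.mul_assoc _ _ _
  have hsplit : Pm = (P 1 * P 2) * (((List.range (m-2)).map fun k => P (3 + k)).prod) := by
    rw [hPm]
    have hrange : List.range m = List.range 2 ++ (List.range (m-2)).map (fun x => 2 + x) := by
      rw [← List.range_add]; congr 1; omega
    rw [hrange, List.map_append, List.prod_append, List.map_map]
    have hfun : ((fun k => P (1 + k)) ∘ fun x => 2 + x) = fun k => P (3 + k) := by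
      funext k; simp only [Function.comp_apply]
      have h13 : 1 + (2 + k) = 3 + k := by omega
      rw [h13]
    rw [hfun]
    congr 1
    norm_num [List.range_succ]
  have hQR : (P 1 * P 2) * (((List.range (m-2)).map fun k => P (3 + k)).prod)
      = (((List.range (m-2)).map fun k => P (3 + k)).prod) * (P 1 * P 2) := by
    refine (Commute.list_prod_right _ _ ?_).eq
    intro x hx
    obtain ⟨k, hk, rfl⟩ := List.mem_map.mp hx
    have hk' := List.mem_range.mp hk
    exact commQ (3 + k) (by omega) (by omega)
  have hQPm : (P 1 * P 2) * Pm = Pm * (P 1 * P 2) := by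
    have key : ∀ (Q R : Matrix (Fin (2*l)) (Fin (2*l)) ℝ), Q * R = R * Q →
        Q * (Q * R) = (Q * R) * Q := by
      intro Q R h
      rw [h, ← Matrix.mul_assoc, h]
    rw [hsplit]
    exact key _ _ hQR
  -- actions of Q on the set
  have hQmv : ∀ z : Fin (2*l) → ℝ, Pm *ᵥ z = ε • z →
      Pm *ᵥ ((P 1 * P 2) *ᵥ z) = ε • ((P 1 * P 2) *ᵥ z) := by
    intro z hz
    rw [mulVec_mulVec, ← hQPm, ← mulVec_mulVec, hz, mulVec_smul]
  have hQnorm : ∀ z : Fin (2*l) → ℝ,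
      psInner (2*l) s ((P 1 * P 2) *ᵥ z) ((P 1 * P 2) *ᵥ z) = psInner (2*l) s z z :=
    fun z => psInner_isometry _ Key1 z z
  have hQorth : ∀ z : Fin (2*l) → ℝ, psInner (2*l) s z ((P 1 * P 2) *ᵥ z) = 0 :=
    fun z => psInner_self_skew _ Key2 z
  set M : Set (Fin (2 * l) → ℝ) :=
    {z | Pm *ᵥ z = ε • z ∧ psInner (2 * l) s z z = 1} with hM
  -- rotation path from x to -x inside M
  have joinNeg : ∀ x ∈ M, JoinedIn M x (-x) := by
    intro x hx
    simp only [hM, Set.mem_setOf_eq] at hx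
    obtain ⟨hx1, hx2⟩ := hx
    have hmem : ∀ t : ℝ,
        (Real.cos t • x + Real.sin t • ((P 1 * P 2) *ᵥ x)) ∈ M := by
      intro t
      simp only [hM, Set.mem_setOf_eq]
      constructor
      · rw [mulVec_add, mulVec_smul, mulVec_smul, hx1, hQmv x hx1]
        simp [smul_add, smul_smul, mul_comm]
      · rw [psInner_expand, hx2, hQnorm x, hx2, hQorth x]
        nlinarith [Real.sin_sq_add_cos_sq t]
    exact ⟨⟨⟨fun t => Real.cos (Real.pi * t) • x
        + Real.sin (Real.pi * t) • ((P 1 * P 2) *ᵥ x), by fun_prop⟩,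
        by norm_num, by norm_num [Real.cos_pi, Real.sin_pi]⟩, fun t => hmem _⟩
  -- normalized segment path
  have joinSeg : ∀ x ∈ M, ∀ y ∈ M, 0 ≤ psInner (2*l) s x y → JoinedIn M x y := by
    intro x hx y hy hxy
    simp only [hM, Set.mem_setOf_eq] at hx hy
    obtain ⟨hx1, hx2⟩ := hx
    obtain ⟨hy1, hy2⟩ := hy
    set c := psInner (2*l) s x y with hc
    have hgpos : ∀ t : ℝ, 0 ≤ t → t ≤ 1 → (0:ℝ) < (1-t)^2 + 2*(1-t)*t*c + t^2 := by
      intro t ht0 ht1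
      nlinarith [mul_nonneg (mul_nonneg (by linarith : (0:ℝ) ≤ 1 - t) ht0) hxy,
        sq_nonneg (1 - 2*t)]
    have hq : ∀ t : ℝ, psInner (2*l) s ((1-t) • x + t • y) ((1-t) • x + t • y)
        = (1-t)^2 + 2*(1-t)*t*c + t^2 := by
      intro t; rw [psInner_expand, hx2, hy2, ← hc]; ring
    have hmem : ∀ t : ℝ, 0 ≤ t → t ≤ 1 →
        ((Real.sqrt ((1-t)^2 + 2*(1-t)*t*c + t^2))⁻¹ • ((1-t) • x + t • y)) ∈ M := by
      intro t ht0 ht1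
      have hg := hgpos t ht0 ht1
      have hsqrt : Real.sqrt ((1-t)^2 + 2*(1-t)*t*c + t^2)
          * Real.sqrt ((1-t)^2 + 2*(1-t)*t*c + t^2)
          = (1-t)^2 + 2*(1-t)*t*c + t^2 :=
        Real.mul_self_sqrt (le_of_lt hg)
      have hspos : 0 < Real.sqrt ((1-t)^2 + 2*(1-t)*t*c + t^2) :=
        Real.sqrt_pos.mpr hg
      simp only [hM, Set.mem_setOf_eq]
      constructor
      · rw [mulVec_smul, mulVec_add, mulVec_smul, mulVec_smul, hx1, hy1]
        rw [smul_comm ((1:ℝ)-t) ε, smul_comm t ε, ← smul_add,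
          smul_comm _ ε]
      · rw [psInner_smul_left, psInner_smul_right, hq]
        field_simp
        have hpos : 0 < (1 - t) * (1 - t + t * 2 * c) + t ^ 2 := by nlinarith
        rw [Real.sq_sqrt hpos.le, div_self hpos.ne']
    refine ⟨⟨⟨fun t => (Real.sqrt ((1-(t:ℝ))^2 + 2*(1-(t:ℝ))*(t:ℝ)*c + (t:ℝ)^2))⁻¹
        • ((1-(t:ℝ)) • x + (t:ℝ) • y), ?_⟩, ?_, ?_⟩, fun t => hmem _ t.2.1 t.2.2⟩
    · have h1 : Continuous fun t : unitInterval =>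
          (1-(t:ℝ))^2 + 2*(1-(t:ℝ))*(t:ℝ)*c + (t:ℝ)^2 := by fun_prop
      have h2 : Continuous fun t : unitInterval =>
          (Real.sqrt ((1-(t:ℝ))^2 + 2*(1-(t:ℝ))*(t:ℝ)*c + (t:ℝ)^2))⁻¹ := by
        refine Continuous.inv₀ (Real.continuous_sqrt.comp h1) ?_
        intro t
        exact ne_of_gt (Real.sqrt_pos.mpr (hgpos t t.2.1 t.2.2))
      exact h2.smul (by fun_prop)
    · norm_num
    · norm_num
  -- glue
  obtain ⟨x₀, hx₀⟩ := hne
  refine ⟨x₀, hx₀, ?_⟩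
  intro y hy
  by_cases hcase : 0 ≤ psInner (2*l) s x₀ y
  · exact joinSeg x₀ hx₀ y hy hcase
  · have hy' := hy
    simp only [hM, Set.mem_setOf_eq] at hy'
    have hnegmem : -y ∈ M := by
      simp only [hM, Set.mem_setOf_eq]
      constructor
      · rw [mulVec_neg, hy'.1, smul_neg]
      · rw [show (-y) = (-1:ℝ) • y from (neg_one_smul ℝ y).symm,
          psInner_smul_left, psInner_smul_right, hy'.2]
        norm_num
    have h2 : 0 ≤ psInner (2*l) s x₀ (-y) := by
      rw [show (-y) = (-1:ℝ) • y from (neg_one_smul ℝ y).symm, psInner_smul_right]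
      nlinarith [lt_of_not_ge hcase]
    exact (joinSeg x₀ hx₀ (-y) hnegmem h2).trans ((joinNeg y hy).symm)
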